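/- If U is a subset-friendly set and A ∈ U, then the union ⋃A (the set of all members of members of A) belongs to U. -/

import Mathlib

/-- A set `U` is *subset-friendly* iff `∅ ∈ U`, `U` is transitive, `U` is closed under
power sets, and any two members of `U` lie in a common transitive member of `U`. -/
def ZFSet.SubsetFriendly (U : ZFSet) : Prop :=
  ∅ ∈ U ∧ U.IsTransitive ∧ (∀ Y ∈ U, ZFSet.powerset Y ∈ U) ∧
    ∀ Y ∈ U, ∀ Z ∈ U, ∃ V ∈ U, V.IsTransitive ∧ Y ∈ V ∧ Z ∈ V

/-- If `U` is subset-friendly and `A ∈ U`, then `⋃₀ A ∈ U`. -/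
theorem sUnion_mem_subsetFriendly (U A : ZFSet)
    (hU : U.SubsetFriendly) (hA : A ∈ U) : (ZFSet.sUnion A : ZFSet) ∈ U := by
  obtain ⟨-, hUtrans, hpow, hpair⟩ := hU
  obtain ⟨V, hVU, hVtrans, hAV, -⟩ := hpair A hA A hA
  have hsub : (ZFSet.sUnion A : ZFSet) ⊆ V := by
    intro x hx
    rw [ZFSet.mem_sUnion] at hx
    obtain ⟨y, hyA, hxy⟩ := hx
    exact hVtrans y (hVtrans A hAV hyA) hxy
  have : (ZFSet.sUnion A : ZFSet) ∈ ZFSet.powerset V := ZFSet.mem_powerset.mpr hsub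
  exact hUtrans _ (hpow V hVU) this
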